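/- The set of purely imaginary fractions {i·a/b : a, b odd integers} with ternary addition ν[x,y,z] = x+y+z and ternary multiplication μ[x,y,z] = xyz forms a zeroless nonunital (3,3)-field: both operations are closed, totally associative, commutative, distributive, every element x = ia/b has additive querelement -ia/b and multiplicative querelement -ib/a, and the structure has neither zero nor identity. -/

import Mathlib

/-- The set of purely imaginary fractions i·a/b with a, b odd integers. -/
def ImOddFrac : Set ℂ :=
  {z : ℂ | ∃ a b : ℤ, Odd a ∧ Odd b ∧ z = ((a : ℂ) / (b : ℂ)) * Complex.I}

lemma oddC_ne_zero {a : ℤ} (h : Odd a) : (a : ℂ) ≠ 0 := by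
  have : a ≠ 0 := by rintro rfl; exact (Int.not_odd_iff_even.mpr Even.zero) h
  exact_mod_cast this

lemma imOddFrac_ne_zero {x : ℂ} (h : x ∈ ImOddFrac) : x ≠ 0 := by
  obtain ⟨a, b, ha, hb, rfl⟩ := h
  exact mul_ne_zero (div_ne_zero (oddC_ne_zero ha) (oddC_ne_zero hb)) Complex.I_ne_zero

/-- the set {i·a/b : a,b odd integers} with ternary addition
ν[x,y,z] = x+y+z and ternary multiplication μ[x,y,z] = xyz is a zeroless
nonunital (3,3)-field: both operations are closed, totally associative,
commutative and distributive; every element has an additive querelement (-x)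
and a multiplicative querelement (1/x = -ib/a), and there is neither a zero
nor an identity. -/
theorem imOddFrac_33_field :
    -- closure of the ternary addition and multiplication
    (∀ x ∈ ImOddFrac, ∀ y ∈ ImOddFrac, ∀ z ∈ ImOddFrac, x + y + z ∈ ImOddFrac) ∧
    (∀ x ∈ ImOddFrac, ∀ y ∈ ImOddFrac, ∀ z ∈ ImOddFrac, x * y * z ∈ ImOddFrac) ∧
    -- total associativity
    (∀ a b c d e : ℂ, (a + b + c) + d + e = a + (b + c + d) + e ∧
      a + (b + c + d) + e = a + b + (c + d + e)) ∧
    (∀ a b c d e : ℂ, (a * b * c) * d * e = a * (b * c * d) * e ∧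
      a * (b * c * d) * e = a * b * (c * d * e)) ∧
    -- commutativity
    (∀ a b c : ℂ, a + b + c = b + a + c ∧ a + b + c = a + c + b) ∧
    (∀ a b c : ℂ, a * b * c = b * a * c ∧ a * b * c = a * c * b) ∧
    -- distributivity in all three positions
    (∀ x y z u v : ℂ, (x + y + z) * u * v = x * u * v + y * u * v + z * u * v ∧
      u * (x + y + z) * v = u * x * v + u * y * v + u * z * v ∧
      u * v * (x + y + z) = u * v * x + u * v * y + u * v * z) ∧
    -- additive and multiplicative querelements
    (∀ x ∈ ImOddFrac, (-x) ∈ ImOddFrac ∧ x + x + (-x) = x) ∧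
    (∀ x ∈ ImOddFrac, x⁻¹ ∈ ImOddFrac ∧
      x * x * x⁻¹ = x ∧ x * x⁻¹ * x = x ∧ x⁻¹ * x * x = x) ∧
    -- zeroless
    (¬∃ z ∈ ImOddFrac, ∀ x ∈ ImOddFrac, ∀ y ∈ ImOddFrac, z * x * y = z) ∧
    -- nonunital
    (¬∃ e ∈ ImOddFrac, ∀ g ∈ ImOddFrac, e * e * g = g) := by
  have hI : Complex.I ∈ ImOddFrac := ⟨1, 1, odd_one, odd_one, by norm_num⟩
  refine ⟨?_, ?_, ?_, ?_, ?_, ?_, ?_, ?_, ?_, ?_, ?_⟩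
  · rintro _ ⟨a, b, ha, hb, rfl⟩ _ ⟨c, d, hc, hd, rfl⟩ _ ⟨e, f, he, hf, rfl⟩
    refine ⟨a * d * f + c * b * f + e * b * d, b * d * f,
      ((ha.mul hd).mul hf).add_odd ((hc.mul hb).mul hf) |>.add_odd
        ((he.mul hb).mul hd), (hb.mul hd).mul hf, ?_⟩
    have hb' := oddC_ne_zero hb
    have hd' := oddC_ne_zero hd
    have hf' := oddC_ne_zero hf
    push_cast
    field_simp
  · rintro _ ⟨a, b, ha, hb, rfl⟩ _ ⟨c, d, hc, hd, rfl⟩ _ ⟨e, f, he, hf, rfl⟩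
    refine ⟨-(a * c * e), b * d * f, ((ha.mul hc).mul he).neg,
      (hb.mul hd).mul hf, ?_⟩
    have hb' := oddC_ne_zero hb
    have hd' := oddC_ne_zero hd
    have hf' := oddC_ne_zero hf
    have hI2 : (Complex.I : ℂ) ^ 2 = -1 := Complex.I_sq
    push_cast
    field_simp
    linear_combination (↑a * ↑c * ↑e) * hI2
  · intro a b c d e; constructor <;> ring
  · intro a b c d e; constructor <;> ring
  · intro a b c; constructor <;> ring
  · intro a b c; constructor <;> ring
  · intro x y z u v; refine ⟨by ring, by ring, by ring⟩
  · rintro x ⟨a, b, ha, hb, rfl⟩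
    exact ⟨⟨-a, b, ha.neg, hb, by push_cast; ring⟩, by ring⟩
  · intro x hx
    have hx0 := imOddFrac_ne_zero hx
    obtain ⟨a, b, ha, hb, rfl⟩ := hx
    have ha' := oddC_ne_zero ha
    have hb' := oddC_ne_zero hb
    refine ⟨⟨-b, a, hb.neg, ha, ?_⟩, ?_, ?_, ?_⟩
    · rw [mul_inv, Complex.inv_I]
      push_cast
      field_simp
    all_goals field_simp
    all_goals ring
  · rintro ⟨z, hz, h⟩
    have := h Complex.I hI Complex.I hI
    rw [mul_assoc, Complex.I_mul_I] at this
    have hz0 : z = 0 := by linear_combination (-1/2 : ℂ) * this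
    exact imOddFrac_ne_zero hz hz0
  · rintro ⟨e, he, h⟩
    obtain ⟨a, b, ha, hb, rfl⟩ := he
    have := h Complex.I hI
    have ha' := oddC_ne_zero ha
    have hb' := oddC_ne_zero hb
    have hI2 : (Complex.I : ℂ) ^ 2 = -1 := Complex.I_sq
    have hab : (a : ℂ)^2 + (b : ℂ)^2 = 0 := by
      field_simp at this
      linear_combination (-1 : ℂ) * this + (a:ℂ)^2 * hI2
    have : (a:ℤ)^2 + b^2 = 0 := by exact_mod_cast hab
    have ha0 : a = 0 := by nlinarith [sq_nonneg a, sq_nonneg b]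
    exact (Int.not_odd_iff_even.mpr (by simp [ha0])) ha
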